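/- Let M be an m×n real matrix with nonnegative entries whose primary bipartite graph PG is acyclic (contains no cycle). Then both M Mᵀ and Mᵀ M have chordal sparsity patterns. -/

import Mathlib

open Matrix

/-- A cycle `w` (a closed walk) in a simple graph `G` has a chord if there is an edge of `G`
joining two vertices of the cycle that is not one of the edges of the cycle (equivalently, for a
cycle, the two vertices are not consecutive on the cycle). -/
def SimpleGraph.Walk.HasChord {V : Type*} {G : SimpleGraph V} {v : V} (w : G.Walk v v) : Prop :=
  ∃ x y : V, x ∈ w.support ∧ y ∈ w.support ∧ G.Adj x y ∧ s(x, y) ∉ w.edges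

/-- A simple graph is chordal if every cycle of length at least 4 has a chord. -/
def SimpleGraph.IsChordalGraph {V : Type*} (G : SimpleGraph V) : Prop :=
  ∀ ⦃v : V⦄ (w : G.Walk v v), w.IsCycle → 4 ≤ w.length → w.HasChord

/-- The primary bipartite graph of an `m × n` matrix `M`: vertices `Fin m ⊕ Fin n`, with an edge
between left vertex `i` and right vertex `j` iff `M i j ≠ 0`, and no edges within a part. -/
def primaryGraph {m n : ℕ} (M : Matrix (Fin m) (Fin n) ℝ) : SimpleGraph (Fin m ⊕ Fin n) :=
  SimpleGraph.fromRel (fun a b => ∃ i j, a = Sum.inl i ∧ b = Sum.inr j ∧ M i j ≠ 0)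

/-- The sparsity-pattern graph of a square matrix `B`: distinct `i`, `i'` are adjacent
whenever `B i i' ≠ 0`. -/
def sparsityGraph {k : ℕ} (B : Matrix (Fin k) (Fin k) ℝ) : SimpleGraph (Fin k) :=
  SimpleGraph.fromRel (fun i i' => B i i' ≠ 0)


namespace ChordalAux
open SimpleGraph Sum

variable {V : Type*} {G : SimpleGraph V}

variable {V : Type*} {G : SimpleGraph V}

lemma getVert_inj_path {u v : V} {p : G.Walk u v} (hp : p.support.Nodup) :
    ∀ {s t : ℕ}, s ≤ p.length → t ≤ p.length → p.getVert s = p.getVert t → s = t := by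
  induction p with
  | nil => intro s t hs ht _; simp at hs ht; omega
  | cons h q ih =>
    simp only [Walk.support_cons, List.nodup_cons] at hp
    intro s t hs ht he
    match s, t with
    | 0, 0 => rfl
    | 0, t + 1 =>
      exfalso
      rw [Walk.getVert_zero, Walk.getVert_cons_succ] at he
      exact hp.1 (Walk.mem_support_iff_exists_getVert.2 ⟨t, he.symm, by simpa using ht⟩)
    | s + 1, 0 =>
      exfalso
      rw [Walk.getVert_zero, Walk.getVert_cons_succ] at he
      exact hp.1 (Walk.mem_support_iff_exists_getVert.2 ⟨s, he, by simpa using hs⟩)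
    | s + 1, t + 1 =>
      rw [Walk.getVert_cons_succ, Walk.getVert_cons_succ] at he
      have := ih hp.2 (by simpa using hs) (by simpa using ht) he
      omega

lemma cyc_inj {v : V} {w : G.Walk v v} (hw : w.support.tail.Nodup) :
    ∀ {s t : ℕ}, s ≤ w.length → t ≤ w.length → w.getVert s = w.getVert t →
      s = t ∨ (s = 0 ∧ t = w.length) ∨ (s = w.length ∧ t = 0) := by
  cases w with
  | nil => intro s t hs ht _; simp at hs ht; omega
  | cons h q =>
    simp only [Walk.support_cons, List.tail_cons] at hw
    intro s t hs ht he
    simp only [Walk.length_cons] at hs ht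
    match s, t with
    | 0, 0 => exact Or.inl rfl
    | 0, t + 1 =>
      rw [Walk.getVert_zero, Walk.getVert_cons_succ] at he
      have : q.getVert q.length = q.getVert t := q.getVert_length.trans he
      have := getVert_inj_path hw (le_refl _) (by omega) this
      right; left; constructor
      · rfl
      · simp [Walk.length_cons]; omega
    | s + 1, 0 =>
      rw [Walk.getVert_zero, Walk.getVert_cons_succ] at he
      have : q.getVert s = q.getVert q.length := he.trans q.getVert_length.symm
      have := getVert_inj_path hw (by omega) (le_refl _) this
      right; right; constructor
      · simp [Walk.length_cons]; omega
      · rfl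
    | s + 1, t + 1 =>
      rw [Walk.getVert_cons_succ, Walk.getVert_cons_succ] at he
      have := getVert_inj_path hw (by omega) (by omega) he
      omega

lemma mem_edges_getVert {u v : V} {w : G.Walk u v} {e : Sym2 V} (he : e ∈ w.edges) :
    ∃ t, t < w.length ∧ e = s(w.getVert t, w.getVert (t + 1)) := by
  induction w with
  | nil => simp at he
  | cons h q ih =>
    rw [Walk.edges_cons, List.mem_cons] at he
    rcases he with he | he
    · exact ⟨0, by simp, by simp [he, Walk.getVert_zero, Walk.getVert_cons_succ]⟩
    · obtain ⟨t, ht, rfl⟩ := ih he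
      exact ⟨t + 1, by simp; omega, by rw [Walk.getVert_cons_succ, Walk.getVert_cons_succ]⟩

section Abstract

variable {α β : Type*} {G : SimpleGraph (α ⊕ β)} {S : SimpleGraph α}

def Compat (G : SimpleGraph (α ⊕ β)) (S : SimpleGraph α) : Prop :=
  ∀ a b : α, S.Adj a b ↔ (a ≠ b ∧ ∃ j : β, G.Adj (.inl a) (.inr j) ∧ G.Adj (.inl b) (.inr j))

noncomputable def mid (hS : Compat G S) {a b : α} (h : S.Adj a b) : β :=
  (((hS a b).1 h).2).choose

lemma mid_adj₁ (hS : Compat G S) {a b : α} (h : S.Adj a b) :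
    G.Adj (.inl a) (.inr (mid hS h)) := (((hS a b).1 h).2).choose_spec.1

lemma mid_adj₂ (hS : Compat G S) {a b : α} (h : S.Adj a b) :
    G.Adj (.inl b) (.inr (mid hS h)) := (((hS a b).1 h).2).choose_spec.2

noncomputable def lift (hS : Compat G S) : ∀ {a b : α}, S.Walk a b → G.Walk (.inl a) (.inl b)
  | _, _, .nil => .nil
  | _, _, .cons h p => .cons (mid_adj₁ hS h) (.cons (mid_adj₂ hS h).symm (lift hS p))

@[simp] lemma length_lift (hS : Compat G S) {a b : α} (p : S.Walk a b) :
    (lift hS p).length = 2 * p.length := by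
  induction p with
  | nil => simp [lift]
  | cons h q ih => simp [lift, ih]; omega

lemma lift_last (hS : Compat G S) {a b : α} (p : S.Walk a b) (hp : p.support.Nodup) {j : β}
    (he : s(Sum.inl b, Sum.inr j) ∈ (lift hS p).edges) :
    G.Adj (.inl (p.getVert (p.length - 1))) (.inr j) := by
  induction p with
  | nil => simp [lift] at he
  | @cons a c b h q ih =>
    simp only [Walk.support_cons, List.nodup_cons] at hp
    rw [lift] at he
    simp only [Walk.edges_cons, List.mem_cons] at he
    rcases he with he | he | he
    · exfalso
      rw [Sym2.eq_iff] at he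
      rcases he with ⟨h1, _⟩ | ⟨h1, _⟩
      · exact hp.1 (Sum.inl_injective h1 ▸ q.end_mem_support)
      · exact Sum.inl_ne_inr h1
    · rw [Sym2.eq_iff] at he
      rcases he with ⟨h1, _⟩ | ⟨h1, h2⟩
      · exfalso; exact Sum.inl_ne_inr h1
      · -- inl b = inl c, inr j = inr (mid hS h)
        have hbc : b = c := Sum.inl_injective h1
        have hj : j = mid hS h := Sum.inr_injective h2
        have hq0 : q.length = 0 := by
          by_contra hq0
          have : q.getVert 0 = q.getVert q.length := by
            rw [Walk.getVert_zero, Walk.getVert_length, hbc]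
          exact hq0 (getVert_inj_path hp.2 (by omega) (le_refl _) this).symm
        have : (Walk.cons h q).length - 1 = 0 := by simp [Walk.length_cons, hq0]
        rw [this, Walk.getVert_zero, hj]
        exact mid_adj₁ hS h
    · have hq1 : 1 ≤ q.length := by
        by_contra hq1
        have h0 : q.length = 0 := by omega
        have : (lift hS q).edges.length = 0 := by
          rw [Walk.length_edges, length_lift, h0]
        rw [List.length_eq_zero_iff] at this
        rw [this] at he
        simp at he
      have := ih hp.2 he
      have hgv : (Walk.cons h q).getVert ((Walk.cons h q).length - 1)
          = q.getVert (q.length - 1) := by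
        have : (Walk.cons h q).length - 1 = (q.length - 1) + 1 := by
          simp [Walk.length_cons]; omega
        rw [this, Walk.getVert_cons_succ]
      rw [hgv]
      exact this

lemma chordal_abstract (hG : G.IsAcyclic) (hS : Compat G S) : S.IsChordalGraph := by
  intro v w hc hlen
  by_contra hnc
  cases w with
  | nil => simp at hlen
  | @cons v c _ h q =>
    have hq : q.support.Nodup := by
      have := hc.support_nodup
      simpa using this
    have hql : 3 ≤ q.length := by
      simp only [Walk.length_cons] at hlen; omega
    have htail : (Walk.cons h q).support.tail.Nodup := hc.support_nodup
    set m := mid hS h with hm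
    have h1 : G.Adj (.inl v) (.inr m) := mid_adj₁ hS h
    have h2 : G.Adj (.inl c) (.inr m) := mid_adj₂ hS h
    have hnotmem : s(Sum.inl v, Sum.inr m) ∉ (Walk.cons h2.symm (lift hS q)).edges := by
      intro hmem
      simp only [Walk.edges_cons, List.mem_cons] at hmem
      rcases hmem with hmem | hmem
      · rw [Sym2.eq_iff] at hmem
        rcases hmem with ⟨ha, _⟩ | ⟨ha, _⟩
        · exact Sum.inl_ne_inr ha
        · exact h.ne (Sum.inl_injective ha)
      · -- the wrap-around case: common neighbour of c and q.getVert (q.length - 1)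
        have hlast : G.Adj (.inl (q.getVert (q.length - 1))) (.inr m) :=
          lift_last hS q hq hmem
        set z := q.getVert (q.length - 1) with hz
        -- positions in W := cons h q
        have hWz : (Walk.cons h q).getVert q.length = z := by
          have : q.length = (q.length - 1) + 1 := by omega
          rw [this, Walk.getVert_cons_succ, ← hz]
        have hWc : (Walk.cons h q).getVert 1 = c := by
          rw [show (1 : ℕ) = 0 + 1 from rfl, Walk.getVert_cons_succ, Walk.getVert_zero]
        have hLen : (Walk.cons h q).length = q.length + 1 := Walk.length_cons _ _
        have hne : c ≠ z := by
          intro hcz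
          have := cyc_inj htail (s := 1) (t := q.length) (by omega) (by omega)
            (hWc.trans (hcz.trans hWz.symm))
          omega
        have hadj : S.Adj c z := (hS c z).2 ⟨hne, m, h2, hlast⟩
        have hmemc : c ∈ (Walk.cons h q).support := by
          rw [Walk.support_cons]
          exact List.mem_cons_of_mem _ q.start_mem_support
        have hmemz : z ∈ (Walk.cons h q).support := by
          rw [Walk.support_cons]
        -- z ∈ q.support
          exact List.mem_cons_of_mem _
            (Walk.mem_support_iff_exists_getVert.2 ⟨q.length - 1, rfl, by omega⟩)
        have hedge : s(c, z) ∈ (Walk.cons h q).edges := by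
          by_contra hne2
          exact hnc ⟨c, z, hmemc, hmemz, hadj, hne2⟩
        obtain ⟨t, ht, hte⟩ := mem_edges_getVert hedge
        rw [Sym2.eq_iff] at hte
        rcases hte with ⟨hA, hB⟩ | ⟨hA, hB⟩
        · have e1 := cyc_inj htail (s := 1) (t := t) (by omega) (by omega)
            (hWc.trans hA)
          have e2 := cyc_inj htail (s := q.length) (t := t + 1) (by omega) (by omega)
            (hWz.trans hB)
          omega
        · have e1 := cyc_inj htail (s := 1) (t := t + 1) (by omega) (by omega)
            (hWc.trans hA)
          have e2 := cyc_inj htail (s := q.length) (t := t) (by omega) (by omega)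
            (hWz.trans hB)
          omega
    -- bridge contradiction
    have hbr := (isAcyclic_iff_forall_adj_isBridge.1 hG) h1
    rw [isBridge_iff] at hbr
    refine hbr (reachable_delete_edges_iff_exists_walk.2 ⟨(Walk.cons h2.symm (lift hS q)).reverse, ?_⟩)
    rw [Walk.edges_reverse, List.mem_reverse]
    exact hnotmem

end Abstract



lemma primary_adj {m n : ℕ} (M : Matrix (Fin m) (Fin n) ℝ) (a : Fin m) (j : Fin n) :
    (primaryGraph M).Adj (Sum.inl a) (Sum.inr j) ↔ M a j ≠ 0 := by
  simp [primaryGraph, SimpleGraph.fromRel_adj]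

lemma mulT_ne {m n : ℕ} (M : Matrix (Fin m) (Fin n) ℝ) (hM : ∀ i j, 0 ≤ M i j)
    (a b : Fin m) : (M * Mᵀ) a b ≠ 0 ↔ ∃ j, M a j ≠ 0 ∧ M b j ≠ 0 := by
  rw [Matrix.mul_apply]
  simp only [Matrix.transpose_apply]
  constructor
  · intro hne
    by_contra hcon
    push_neg at hcon
    apply hne
    apply Finset.sum_eq_zero
    intro j _
    rcases eq_or_ne (M a j) 0 with h0 | h0
    · rw [h0, zero_mul]
    · rw [hcon j h0, mul_zero]
  · rintro ⟨j, hj1, hj2⟩ h0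
    have := (Finset.sum_eq_zero_iff_of_nonneg
      (fun i _ => mul_nonneg (hM a i) (hM b i))).1 h0 j (Finset.mem_univ j)
    exact mul_ne_zero hj1 hj2 this

lemma compat_main {m n : ℕ} (M : Matrix (Fin m) (Fin n) ℝ) (hM : ∀ i j, 0 ≤ M i j) :
    Compat (primaryGraph M) (sparsityGraph (M * Mᵀ)) := by
  intro a b
  rw [sparsityGraph, SimpleGraph.fromRel_adj]
  simp only [mulT_ne M hM, primary_adj]
  constructor
  · rintro ⟨hne, h⟩
    refine ⟨hne, ?_⟩
    rcases h with ⟨j, h1, h2⟩ | ⟨j, h1, h2⟩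
    exacts [⟨j, h1, h2⟩, ⟨j, h2, h1⟩]
  · rintro ⟨hne, j, h1, h2⟩
    exact ⟨hne, Or.inl ⟨j, h1, h2⟩⟩

lemma acyclic_T {m n : ℕ} (M : Matrix (Fin m) (Fin n) ℝ) (h : (primaryGraph M).IsAcyclic) :
    (primaryGraph Mᵀ).IsAcyclic := by
  have hswap : Function.Injective (Sum.swap : Fin n ⊕ Fin m → Fin m ⊕ Fin n) :=
    fun x y hxy => by simpa using congrArg Sum.swap hxy
  let f : primaryGraph Mᵀ →g primaryGraph M :=
    { toFun := Sum.swap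
      map_rel' := by
        intro x y hxy
        rw [primaryGraph, SimpleGraph.fromRel_adj] at hxy ⊢
        obtain ⟨hne, hr⟩ := hxy
        refine ⟨fun hh => hne (hswap hh), ?_⟩
        rcases hr with ⟨j, i, rfl, rfl, hMij⟩ | ⟨j, i, rfl, rfl, hMij⟩
        · right
          exact ⟨i, j, rfl, rfl, hMij⟩
        · left
          exact ⟨i, j, rfl, rfl, hMij⟩ }
  intro v w hc
  exact h _ ((Walk.map_isCycle_iff_of_injective (f := f) hswap).2 hc)

end ChordalAux

/-- If the primary bipartite graph of a nonnegative matrix `M` is acyclic, then both `M * Mᵀ`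
and `Mᵀ * M` have chordal sparsity patterns. -/
theorem chordal_of_acyclic {m n : ℕ} (M : Matrix (Fin m) (Fin n) ℝ)
    (hM : ∀ i j, 0 ≤ M i j)
    (hacyclic : (primaryGraph M).IsAcyclic) :
    (sparsityGraph (M * Mᵀ)).IsChordalGraph ∧ (sparsityGraph (Mᵀ * M)).IsChordalGraph := by
  constructor
  · exact ChordalAux.chordal_abstract hacyclic (ChordalAux.compat_main M hM)
  · have hM' : ∀ j i, 0 ≤ Mᵀ j i := fun j i => hM i j
    have hcmp := ChordalAux.compat_main Mᵀ hM'
    rw [Matrix.transpose_transpose] at hcmp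
    exact ChordalAux.chordal_abstract (ChordalAux.acyclic_T M hacyclic) hcmp
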